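/- Let M and V be compact metric spaces and suppose there exists ε > 0 such that any two continuous maps from V to M that are 4ε-close are homotopic. For each k ∈ ℕ let N_k be a metric space, f_k : M → N_k a continuous map which is a homotopy equivalence with homotopy inverse g_k : N_k → M, and h_k : V → N_k a topological embedding with f_k(M) ⊆ h_k(V). Assume that the sequences (g_k) and (h_k) are almost equicontinuous. Then there is a finite set F ⊆ ℕ such that for every k ∈ ℕ there exists j ∈ F with f_k homotopic, as a map M → N_k, to h_k ∘ h_j⁻¹ ∘ f_j. -/

import Mathlib

/-- A sequence of maps `f k : X k → Y k` between metric spaces is `ε`-equicontinuous if there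
is a common `δ > 0` such that all the maps move `δ`-close points to `ε`-close points. -/
def IsEquicontFamily {X Y : ℕ → Type*} [∀ k, MetricSpace (X k)] [∀ k, MetricSpace (Y k)]
    (I : Set ℕ) (f : ∀ k, X k → Y k) (ε : ℝ) : Prop :=
  ∃ δ > 0, ∀ k ∈ I, ∀ x x' : X k, dist x x' < δ → dist (f k x) (f k x') < ε

/-- A sequence of maps `f k : X k → Y k` between metric spaces is almost equicontinuous if
for every `ε > 0` there is a finite set `F ⊆ ℕ` such that the subfamily indexed by `ℕ \ F`
is `ε`-equicontinuous. -/
def IsAlmostEquicont {X Y : ℕ → Type*} [∀ k, MetricSpace (X k)] [∀ k, MetricSpace (Y k)]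
    (f : ∀ k, X k → Y k) : Prop :=
  ∀ ε > 0, ∃ F : Finset ℕ, IsEquicontFamily ((F : Set ℕ)ᶜ) f ε

/-- Let `M`, `V` be compact metric spaces such that for some `ε > 0` any two `4ε`-close
continuous maps `V → M` are homotopic.  For each `k` let `f k : M → N k` be a homotopy
equivalence with homotopy inverse `g k : N k → M`, and `h k : V → N k` a topological
embedding with `f k '' M ⊆ h k '' V`; here `φ k : M → V` denotes the map `(h k)⁻¹ ∘ f k`.
If `(g k)` and `(h k)` are almost equicontinuous, then there is a finite `F ⊆ ℕ` such that
every `f k` is homotopic to `h k ∘ (h j)⁻¹ ∘ f j` for some `j ∈ F`. -/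
theorem finitely_many_classes_of_almost_equicont_homotopy_inverses
    {M V : Type*} [MetricSpace M] [CompactSpace M] [MetricSpace V] [CompactSpace V]
    {N : ℕ → Type*} [∀ k, MetricSpace (N k)]
    (ε : ℝ) (hε : 0 < ε)
    (hclose : ∀ f g : C(V, M), (∀ x, dist (f x) (g x) ≤ 4 * ε) → f.Homotopic g)
    (f : ∀ k, C(M, N k)) (g : ∀ k, C(N k, M))
    (hgf : ∀ k, ((g k).comp (f k)).Homotopic (ContinuousMap.id M))
    (hfg : ∀ k, ((f k).comp (g k)).Homotopic (ContinuousMap.id (N k)))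
    (h : ∀ k, V → N k) (hemb : ∀ k, Topology.IsEmbedding (h k))
    (φ : ∀ k, M → V) (hφ : ∀ (k : ℕ) (x : M), h k (φ k x) = f k x)
    (hφc : ∀ k, Continuous (φ k))
    (hgae : IsAlmostEquicont (X := N) (Y := fun _ => M) (fun k => ⇑(g k)))
    (hhae : IsAlmostEquicont (X := fun _ => V) (Y := N) h) :
    ∃ F : Finset ℕ, ∀ k : ℕ, ∃ j ∈ F,
      (f k).Homotopic
        ((⟨h k, (hemb k).continuous⟩ : C(V, N k)).comp ⟨φ j, hφc j⟩) := by
  classical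
  set β : ∀ k, C(V, M) := fun k => (g k).comp ⟨h k, (hemb k).continuous⟩ with hβdef
  obtain ⟨Fg, δg, hδg, hgec⟩ := hgae ε hε
  obtain ⟨Fh, δh, hδh, hhec⟩ := hhae δg hδg
  set F₀ : Finset ℕ := Fg ∪ Fh with hF₀
  have hβec : ∀ k ∉ F₀, ∀ v v' : V, dist v v' < δh → dist (β k v) (β k v') < ε := by
    intro k hk v v' hvv'
    have hkg : k ∉ Fg := fun hc => hk (Finset.mem_union_left _ hc)
    have hkh : k ∉ Fh := fun hc => hk (Finset.mem_union_right _ hc)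
    have h1 : dist (h k v) (h k v') < δg := hhec k (by simpa using hkh) v v' hvv'
    exact hgec k (by simpa using hkg) _ _ h1
  obtain ⟨tV, htVfin, htVcov⟩ :=
    (Metric.totallyBounded_iff.mp (isCompact_univ : IsCompact (Set.univ : Set V)).totallyBounded) δh hδh
  obtain ⟨tM, htMfin, htMcov⟩ :=
    (Metric.totallyBounded_iff.mp (isCompact_univ : IsCompact (Set.univ : Set M)).totallyBounded) ε hε
  set sV : Finset V := htVfin.toFinset with hsV
  set sM : Finset M := htMfin.toFinset with hsM
  have hpat : ∀ (k : ℕ) (v : sV), ∃ y : sM, dist (β k (v : V)) (y : M) < ε := by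
    intro k v
    have hm : (β k (v : V)) ∈ ⋃ y ∈ tM, Metric.ball y ε := htMcov (Set.mem_univ _)
    simp only [Set.mem_iUnion, Metric.mem_ball] at hm
    obtain ⟨y, hy, hd⟩ := hm
    exact ⟨⟨y, htMfin.mem_toFinset.mpr hy⟩, hd⟩
  choose c hc using hpat
  set rep : (sV → sM) → ℕ := fun p => if hp : ∃ k, k ∉ F₀ ∧ c k = p then hp.choose else 0
    with hrep
  refine ⟨F₀ ∪ Finset.image rep Finset.univ, fun k => ?_⟩
  by_cases hk : k ∈ F₀
  · refine ⟨k, Finset.mem_union_left _ hk, ?_⟩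
    have heq : (f k) = ((⟨h k, (hemb k).continuous⟩ : C(V, N k)).comp ⟨φ k, hφc k⟩) :=
      ContinuousMap.ext fun x => (hφ k x).symm
    rw [← heq]
  · have hex : ∃ k', k' ∉ F₀ ∧ c k' = c k := ⟨k, hk, rfl⟩
    set j : ℕ := rep (c k) with hjdef
    have hj : j ∉ F₀ ∧ c j = c k := by
      have hre : rep (c k) = hex.choose := dif_pos hex
      rw [hjdef, hre]; exact hex.choose_spec
    refine ⟨j, Finset.mem_union_right _
      (Finset.mem_image.mpr ⟨c k, Finset.mem_univ _, rfl⟩), ?_⟩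
    -- 4ε-closeness of β k and β j
    have hclose4 : ∀ v : V, dist (β k v) (β j v) ≤ 4 * ε := by
      intro v
      obtain ⟨v₀, hv₀, hdv⟩ : ∃ v₀ ∈ tV, dist v v₀ < δh := by
        have hm := htVcov (Set.mem_univ v)
        simp only [Set.mem_iUnion, Metric.mem_ball] at hm
        obtain ⟨y, hy, hd⟩ := hm
        exact ⟨y, hy, hd⟩
      set v₀' : sV := ⟨v₀, htVfin.mem_toFinset.mpr hv₀⟩ with hv₀'
      have d1 : dist (β k v) (β k v₀) < ε := hβec k hk v v₀ hdv
      have d2 : dist (β k v₀) ((c k v₀' : M)) < ε := hc k v₀'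
      have d3 : dist (β j v₀) ((c j v₀' : M)) < ε := hc j v₀'
      have d4 : dist (β j v₀) (β j v) < ε := hβec j hj.1 v₀ v (by rwa [dist_comm])
      have hcc : (c j v₀' : M) = (c k v₀' : M) := by rw [hj.2]
      have dmid : dist (β k v₀) (β j v₀) < 2 * ε := by
        have ht := dist_triangle (β k v₀) ((c k v₀' : M)) (β j v₀)
        have h3' : dist ((c k v₀' : M)) (β j v₀) < ε := by
          rw [← hcc, dist_comm]; exact d3
        linarith
      have ht4 := dist_triangle4 (β k v) (β k v₀) (β j v₀) (β j v)
      linarith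
    have Hβ : (β k).Homotopic (β j) := hclose _ _ hclose4
    set Ak : C(V, N k) := ⟨h k, (hemb k).continuous⟩ with hAk
    set Φj : C(M, V) := ⟨φ j, hφc j⟩ with hΦj
    have e1 : (β j).comp Φj = (g j).comp (f j) :=
      ContinuousMap.ext fun x => congrArg (g j) (hφ j x)
    have H1 : ((β k).comp Φj).Homotopic (ContinuousMap.id M) := by
      have hstep := ContinuousMap.Homotopic.comp Hβ (ContinuousMap.Homotopic.refl Φj)
      refine hstep.trans ?_
      rw [e1]; exact hgf j
    have Ha : (((f k).comp (g k)).comp (Ak.comp Φj)).Homotopic (Ak.comp Φj) := by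
      have hstep := ContinuousMap.Homotopic.comp (hfg k) (ContinuousMap.Homotopic.refl (Ak.comp Φj))
      simpa [ContinuousMap.id_comp] using hstep
    have Hb : (((f k).comp (g k)).comp (Ak.comp Φj)) = (f k).comp ((β k).comp Φj) := by
      ext x; rfl
    have Hc : ((f k).comp ((β k).comp Φj)).Homotopic (f k) := by
      have hstep := ContinuousMap.Homotopic.comp (ContinuousMap.Homotopic.refl (f k)) H1
      simpa [ContinuousMap.comp_id] using hstep
    exact Hc.symm.trans (Hb ▸ Ha)
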